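/- In the free algebra A = C⟨X,Y⟩ (with no relations between X and Y), the element P = XY − YX satisfies ∂_{ℓ,X}(P) = 0 and ∂_{r,Y}(P) = 0, but P is not a scalar. Hence in the non-bi-partite setting there exist non-scalar elements with vanishing bi-free difference quotients. -/

import Mathlib

open Finset TensorProduct

/-- In `A = ℂ⟨X,Y⟩` (free, no relations), the product of a word over the
alphabet `Bool`, where `true` is the left variable `X` and `false` is the right
variable `Y`. -/
noncomputable def bwordProd (w : List Bool) : FreeAlgebra ℂ Bool :=
  (w.map (FreeAlgebra.ι ℂ)).prod

lemma bwordProd_pair (a b : Bool) :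
    bwordProd [a, b] = FreeAlgebra.ι ℂ a * FreeAlgebra.ι ℂ b := by
  simp [bwordProd]

theorem stmt3
    (Dl Dr : FreeAlgebra ℂ Bool →ₗ[ℂ] FreeAlgebra ℂ Bool ⊗[ℂ] FreeAlgebra ℂ Bool)
    (hDl : ∀ w : List Bool, Dl (bwordProd w) =
      ∑ k ∈ range w.length,
        if w[k]? = some true then
          (bwordProd (w.take k) * bwordProd ((w.drop (k+1)).filter (fun b => !b)))
            ⊗ₜ[ℂ] bwordProd ((w.drop (k+1)).filter (fun b => b))
        else 0)
    (hDr : ∀ w : List Bool, Dr (bwordProd w) =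
      ∑ k ∈ range w.length,
        if w[k]? = some false then
          (bwordProd (w.take k) * bwordProd ((w.drop (k+1)).filter (fun b => b)))
            ⊗ₜ[ℂ] bwordProd ((w.drop (k+1)).filter (fun b => !b))
        else 0) :
    Dl (FreeAlgebra.ι ℂ true * FreeAlgebra.ι ℂ false
        - FreeAlgebra.ι ℂ false * FreeAlgebra.ι ℂ true) = 0 ∧
    Dr (FreeAlgebra.ι ℂ true * FreeAlgebra.ι ℂ false
        - FreeAlgebra.ι ℂ false * FreeAlgebra.ι ℂ true) = 0 ∧
    ¬ ∃ c : ℂ, FreeAlgebra.ι ℂ true * FreeAlgebra.ι ℂ false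
        - FreeAlgebra.ι ℂ false * FreeAlgebra.ι ℂ true
          = algebraMap ℂ (FreeAlgebra ℂ Bool) c := by
  have h1 := hDl [true, false]
  have h2 := hDl [false, true]
  have h3 := hDr [true, false]
  have h4 := hDr [false, true]
  simp [Finset.sum_range_succ, bwordProd] at h1 h2 h3 h4
  refine ⟨?_, ?_, ?_⟩
  · rw [map_sub, h1, h2, sub_self]
  · rw [map_sub, h3, h4, sub_self]
  · rintro ⟨c, hc⟩
    -- map to 2×2 matrices: X ↦ E 0 1, Y ↦ E 1 0
    let f : FreeAlgebra ℂ Bool →ₐ[ℂ] Matrix (Fin 2) (Fin 2) ℂ :=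
      FreeAlgebra.lift ℂ (fun b => if b then Matrix.single 0 1 1
        else Matrix.single 1 0 1)
    have := congrArg f hc
    simp only [map_sub, map_mul, AlgHom.commutes, f, FreeAlgebra.lift_ι_apply] at this
    have h00 := congrFun (congrFun this 0) 0
    have h11 := congrFun (congrFun this 1) 1
    simp [Matrix.mul_apply, Matrix.single, Matrix.algebraMap_matrix_apply,
      Fin.sum_univ_two] at h00 h11
    rw [← h11] at h00
    norm_num at h00
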